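/- Let (b₁,b₂) ∈ B with b₃ = (b₁b₂)^(−1), and assume b₁ ≤ 2b₂ − b₃ (so (b₁,b₂) lies in B_I, the existence region of the type-I Riemann ellipsoids). Then (x²−y²)·D(x,y,z) ≠ 0 both for (x,y,z) = (b₁,b₃,b₂) and for (x,y,z) = (b₃,b₁,b₂), and the four numbers G^R₊(b₁,b₃,b₂), G^R₋(b₁,b₃,b₂), G^R₊(b₃,b₁,b₂), G^R₋(b₃,b₁,b₂) are all nonnegative; consequently the quantities N^R₊(x,y,z) = ½(√(G^R₊(x,y,z)) + √(G^R₋(x,y,z))) and N^R₋(x,y,z) = ½(√(G^R₊(x,y,z)) − √(G^R₋(x,y,z))), which define the momenta of the type-I ellipsoids, are well-defined real numbers at both argument triples. -/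
import Mathlib


open Real MeasureTheory

/-- `C₁(x,y,z) = 2πg ∫₀^∞ s·((s+x²)(s+y²)(s+z²))^(−3/2) ds`. -/
noncomputable def riC1 (g x y z : ℝ) : ℝ :=
  2 * π * g * ∫ s in Set.Ioi (0:ℝ),
    s * ((s + x ^ 2) * (s + y ^ 2) * (s + z ^ 2)) ^ (-(3:ℝ)/2)

/-- `C₂(x,y,z) = 2πg ∫₀^∞ s²·((s+x²)(s+y²)(s+z²))^(−3/2) ds`. -/
noncomputable def riC2 (g x y z : ℝ) : ℝ :=
  2 * π * g * ∫ s in Set.Ioi (0:ℝ),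
    s ^ 2 * ((s + x ^ 2) * (s + y ^ 2) * (s + z ^ 2)) ^ (-(3:ℝ)/2)

/-- `G(x,y,z) = x²(y²−z²)C₁ + (y²−4z²)(z²C₁ + C₂)`. -/
noncomputable def Gfun (g x y z : ℝ) : ℝ :=
  x ^ 2 * (y ^ 2 - z ^ 2) * riC1 g x y z
    + (y ^ 2 - 4 * z ^ 2) * (z ^ 2 * riC1 g x y z + riC2 g x y z)

/-- `D(x,y,z) = x²(y²−z²) + z²(4z²−y²)`. -/
def Dfun (x y z : ℝ) : ℝ := x ^ 2 * (y ^ 2 - z ^ 2) + z ^ 2 * (4 * z ^ 2 - y ^ 2)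

/-- `G^R₊(x,y,z)`. -/
noncomputable def GRp (g x y z : ℝ) : ℝ :=
  (y - z) ^ 4 * (x ^ 2 - (y + 2 * z) ^ 2) *
    ((x ^ 2 - z ^ 2) * Gfun g x y z) / ((x ^ 2 - y ^ 2) * Dfun x y z)

/-- `G^R₋(x,y,z)`. -/
noncomputable def GRm (g x y z : ℝ) : ℝ :=
  (y + z) ^ 4 * (x ^ 2 - (y - 2 * z) ^ 2) *
    ((x ^ 2 - z ^ 2) * Gfun g x y z) / ((x ^ 2 - y ^ 2) * Dfun x y z)

/-- `N^R₊(x,y,z) = ½(√G^R₊ + √G^R₋)`. -/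
noncomputable def NRp (g x y z : ℝ) : ℝ :=
  (Real.sqrt (GRp g x y z) + Real.sqrt (GRm g x y z)) / 2

/-- `N^R₋(x,y,z) = ½(√G^R₊ − √G^R₋)`. -/
noncomputable def NRm (g x y z : ℝ) : ℝ :=
  (Real.sqrt (GRp g x y z) - Real.sqrt (GRm g x y z)) / 2

/-- Membership in `B = {(b₁,b₂) : b₁ > b₂ > b₁^(−1/2) > 0}`. -/
def memB (b1 b2 : ℝ) : Prop := b2 < b1 ∧ (Real.sqrt b1)⁻¹ < b2 ∧ 0 < (Real.sqrt b1)⁻¹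


/-- The integral defining `C₁` has a nonnegative integrand, hence `C₁ ≥ 0`. -/
lemma riC1_nonneg (g x y z : ℝ) (hg : 0 ≤ g) : 0 ≤ riC1 g x y z := by
  unfold riC1
  have h : 0 ≤ ∫ s in Set.Ioi (0:ℝ),
      s * ((s + x ^ 2) * (s + y ^ 2) * (s + z ^ 2)) ^ (-(3:ℝ)/2) := by
    apply setIntegral_nonneg measurableSet_Ioi
    intro s hs
    have hs' : (0:ℝ) < s := hs
    have hb : (0:ℝ) ≤ (s + x ^ 2) * (s + y ^ 2) * (s + z ^ 2) := by positivity
    exact mul_nonneg hs'.le (Real.rpow_nonneg hb _)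
  exact mul_nonneg (mul_nonneg (by positivity : (0:ℝ) ≤ 2 * π) hg) h

/-- The integral defining `C₂` has a nonnegative integrand, hence `C₂ ≥ 0`. -/
lemma riC2_nonneg (g x y z : ℝ) (hg : 0 ≤ g) : 0 ≤ riC2 g x y z := by
  unfold riC2
  have h : 0 ≤ ∫ s in Set.Ioi (0:ℝ),
      s ^ 2 * ((s + x ^ 2) * (s + y ^ 2) * (s + z ^ 2)) ^ (-(3:ℝ)/2) := by
    apply setIntegral_nonneg measurableSet_Ioi
    intro s hs
    have hs' : (0:ℝ) < s := hs
    have hb : (0:ℝ) ≤ (s + x ^ 2) * (s + y ^ 2) * (s + z ^ 2) := by positivity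
    exact mul_nonneg (sq_nonneg s) (Real.rpow_nonneg hb _)
  exact mul_nonneg (mul_nonneg (by positivity : (0:ℝ) ≤ 2 * π) hg) h

/-- When both coefficient combinations are nonpositive, `G ≤ 0`. -/
lemma Gfun_nonpos (g x y z : ℝ) (hg : 0 ≤ g)
    (hA : x ^ 2 * (y ^ 2 - z ^ 2) + (y ^ 2 - 4 * z ^ 2) * z ^ 2 ≤ 0)
    (hB : y ^ 2 - 4 * z ^ 2 ≤ 0) : Gfun g x y z ≤ 0 := by
  have h1 := riC1_nonneg g x y z hg
  have h2 := riC2_nonneg g x y z hg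
  have e : Gfun g x y z =
      (x ^ 2 * (y ^ 2 - z ^ 2) + (y ^ 2 - 4 * z ^ 2) * z ^ 2) * riC1 g x y z
        + (y ^ 2 - 4 * z ^ 2) * riC2 g x y z := by
    unfold Gfun; ring
  rw [e]
  have t1 : (x ^ 2 * (y ^ 2 - z ^ 2) + (y ^ 2 - 4 * z ^ 2) * z ^ 2) * riC1 g x y z ≤ 0 :=
    mul_nonpos_iff.mpr (Or.inr ⟨hA, h1⟩)
  have t2 : (y ^ 2 - 4 * z ^ 2) * riC2 g x y z ≤ 0 :=
    mul_nonpos_iff.mpr (Or.inr ⟨hB, h2⟩)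
  linarith

set_option maxHeartbeats 1000000 in
/-- On the existence region `B_I` (`b₁ ≤ 2b₂ − b₃`), the denominators
`(x²−y²)D(x,y,z)` are nonzero and `G^R₊`, `G^R₋` are nonnegative at the triples
`(b₁,b₃,b₂)` and `(b₃,b₁,b₂)`, so the momenta `N^R±` of the type-I ellipsoids are well
defined. -/
theorem stmt_10 (g b1 b2 b3 : ℝ) (hg : 0 < g) (hB : memB b1 b2) (hb3 : b3 = (b1 * b2)⁻¹)
    (hI : b1 ≤ 2 * b2 - b3) :
    (b1 ^ 2 - b3 ^ 2) * Dfun b1 b3 b2 ≠ 0 ∧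
    (b3 ^ 2 - b1 ^ 2) * Dfun b3 b1 b2 ≠ 0 ∧
    0 ≤ GRp g b1 b3 b2 ∧ 0 ≤ GRm g b1 b3 b2 ∧
    0 ≤ GRp g b3 b1 b2 ∧ 0 ≤ GRm g b3 b1 b2 ∧
    Real.sqrt (GRp g b1 b3 b2) ^ 2 = GRp g b1 b3 b2 ∧
    Real.sqrt (GRm g b1 b3 b2) ^ 2 = GRm g b1 b3 b2 ∧
    Real.sqrt (GRp g b3 b1 b2) ^ 2 = GRp g b3 b1 b2 ∧
    Real.sqrt (GRm g b3 b1 b2) ^ 2 = GRm g b3 b1 b2 := by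
  obtain ⟨hb21, hbs, hspos⟩ := hB
  have hsq : 0 < Real.sqrt b1 := inv_pos.mp hspos
  have hb1 : 0 < b1 := Real.sqrt_pos.mp hsq
  have hb2 : 0 < b2 := lt_trans hspos hbs
  have hb30 : 0 < b3 := by rw [hb3]; positivity
  have h1 : 1 < Real.sqrt b1 * b2 := by
    have := mul_lt_mul_of_pos_left hbs hsq
    rwa [mul_inv_cancel₀ hsq.ne'] at this
  have h2 : 1 < b1 * b2 ^ 2 := by
    nlinarith [Real.sq_sqrt hb1.le, sq_nonneg (Real.sqrt b1 * b2 - 1)]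
  have he : b3 * (b1 * b2) = 1 := by rw [hb3]; field_simp
  have hb32 : b3 < b2 := by nlinarith [mul_pos hb1 hb2]
  have hb12 : b1 < 2 * b2 := by linarith
  have hgnn : (0:ℝ) ≤ g := hg.le
  clear hbs hspos hsq h1 h2 he hb3 hg
  have hsq12 : 0 < b1 ^ 2 - b2 ^ 2 := by nlinarith
  have hsq42 : 0 < 4 * b2 ^ 2 - b1 ^ 2 := by nlinarith
  have hsq13 : 0 < b1 ^ 2 - b3 ^ 2 := by nlinarith
  have hsq23 : 0 < b2 ^ 2 - b3 ^ 2 := by nlinarith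
  -- D is the same at both triples and positive
  have hDval2 : Dfun b3 b1 b2 = Dfun b1 b3 b2 := by unfold Dfun; ring
  have hD : 0 < Dfun b1 b3 b2 := by
    have t1 : 0 < b3 ^ 2 * (b1 ^ 2 - b2 ^ 2) := mul_pos (by positivity) hsq12
    have t2 : 0 < b2 ^ 2 * (4 * b2 ^ 2 - b1 ^ 2) := mul_pos (by positivity) hsq42
    unfold Dfun; nlinarith [t1, t2]
  have hden1 : 0 < (b1 ^ 2 - b3 ^ 2) * Dfun b1 b3 b2 := mul_pos hsq13 hD
  have hden2 : (b3 ^ 2 - b1 ^ 2) * Dfun b3 b1 b2 < 0 := by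
    rw [hDval2]; exact mul_neg_of_neg_of_pos (by linarith) hD
  -- G ≤ 0 at the first triple (b1, b3, b2)
  have hG1 : Gfun g b1 b3 b2 ≤ 0 := by
    apply Gfun_nonpos g b1 b3 b2 hgnn
    · nlinarith [mul_pos (mul_pos hb2 hb2) (show 0 < 4 * b2 ^ 2 - b3 ^ 2 by nlinarith),
        mul_pos (mul_pos hb1 hb1) hsq23]
    · nlinarith
  -- G ≤ 0 at the second triple (b3, b1, b2)
  have hG2 : Gfun g b3 b1 b2 ≤ 0 := by
    apply Gfun_nonpos g b3 b1 b2 hgnn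
    · -- b3²(b1²−b2²) + (b1²−4b2²)b2² ≤ 0
      have k1 : b3 * (b1 ^ 2 - b2 ^ 2) ≤ b2 ^ 2 * (2 * b2 + b1) := by
        nlinarith [mul_nonneg (sub_nonneg.mpr hb32.le) hsq12.le,
          mul_pos (mul_pos hb2 (show (0:ℝ) < 2 * b2 - b1 by linarith))
            (show (0:ℝ) < b1 + b2 by linarith),
          mul_pos (mul_pos hb2 hb2) hb2]
      have ka : b3 * (2 * b2 + b1) ≤ (2 * b2 - b1) * (2 * b2 + b1) :=
        mul_le_mul_of_nonneg_right (by linarith) (by linarith)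
      have m1 : b3 * (b3 * (b1 ^ 2 - b2 ^ 2)) ≤ b3 * (b2 ^ 2 * (2 * b2 + b1)) :=
        mul_le_mul_of_nonneg_left k1 hb30.le
      have m2 : b2 ^ 2 * (b3 * (2 * b2 + b1)) ≤ b2 ^ 2 * ((2 * b2 - b1) * (2 * b2 + b1)) :=
        mul_le_mul_of_nonneg_left ka (by positivity)
      nlinarith [m1, m2]
    · nlinarith
  -- numerator sign facts
  have f31 : (b1 ^ 2 - b2 ^ 2) * Gfun g b1 b3 b2 ≤ 0 :=
    mul_nonpos_iff.mpr (Or.inl ⟨hsq12.le, hG1⟩)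
  have f32 : 0 ≤ (b3 ^ 2 - b2 ^ 2) * Gfun g b3 b1 b2 :=
    mul_nonneg_iff.mpr (Or.inr ⟨by linarith, hG2⟩)
  have hGRp1 : 0 ≤ GRp g b1 b3 b2 := by
    unfold GRp
    apply div_nonneg _ hden1.le
    have f2 : b1 ^ 2 - (b3 + 2 * b2) ^ 2 ≤ 0 := by
      have := pow_le_pow_left₀ hb1.le (show b1 ≤ b3 + 2 * b2 by linarith) 2
      linarith
    rw [mul_assoc]
    exact mul_nonneg (by positivity) (mul_nonneg_iff.mpr (Or.inr ⟨f2, f31⟩))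
  have hGRm1 : 0 ≤ GRm g b1 b3 b2 := by
    unfold GRm
    apply div_nonneg _ hden1.le
    have f2 : b1 ^ 2 - (b3 - 2 * b2) ^ 2 ≤ 0 := by
      have h' := pow_le_pow_left₀ hb1.le hI 2
      have e : (2 * b2 - b3) ^ 2 = (b3 - 2 * b2) ^ 2 := by ring
      rw [e] at h'
      linarith
    rw [mul_assoc]
    exact mul_nonneg (by positivity) (mul_nonneg_iff.mpr (Or.inr ⟨f2, f31⟩))
  have hGRp2 : 0 ≤ GRp g b3 b1 b2 := by
    unfold GRp
    refine div_nonneg_iff.mpr (Or.inr ⟨?_, hden2.le⟩)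
    have f2 : b3 ^ 2 - (b1 + 2 * b2) ^ 2 ≤ 0 := by
      have := pow_le_pow_left₀ hb30.le (show b3 ≤ b1 + 2 * b2 by linarith) 2
      linarith
    rw [mul_assoc]
    exact mul_nonpos_iff.mpr (Or.inl ⟨by positivity, mul_nonpos_iff.mpr (Or.inr ⟨f2, f32⟩)⟩)
  have hGRm2 : 0 ≤ GRm g b3 b1 b2 := by
    unfold GRm
    refine div_nonneg_iff.mpr (Or.inr ⟨?_, hden2.le⟩)
    have f2 : b3 ^ 2 - (b1 - 2 * b2) ^ 2 ≤ 0 := by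
      have h' := pow_le_pow_left₀ hb30.le (show b3 ≤ 2 * b2 - b1 by linarith) 2
      have e : (2 * b2 - b1) ^ 2 = (b1 - 2 * b2) ^ 2 := by ring
      rw [e] at h'
      linarith
    rw [mul_assoc]
    exact mul_nonpos_iff.mpr (Or.inl ⟨by positivity, mul_nonpos_iff.mpr (Or.inr ⟨f2, f32⟩)⟩)
  exact ⟨hden1.ne', hden2.ne, hGRp1, hGRm1, hGRp2, hGRm2,
    Real.sq_sqrt hGRp1, Real.sq_sqrt hGRm1, Real.sq_sqrt hGRp2, Real.sq_sqrt hGRm2⟩
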